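/- arXiv:0905.2997 — 2 statements merged into one kernel-verified Lean document; each statement's English description precedes it below -/
import Mathlib

section
/- Suppose n = |H| ≥ 3. For any irreducible query tree T whose leaves are H, the rounded distribution π' satisfies (1/2) · C(T, π) ≤ C(T, π') ≤ (3/2) · C(T, π). -/
open Finset

namespace ActiveLearning

variable {H A : Type*} {m : ℕ}

/-- The total mass of a weight function `v` on a finite set `S`. -/
def mass (v : H → ℝ) (S : Finset H) : ℝ := ∑ s ∈ S, v s

/-- `v` restricted to `S` and normalized. -/
noncomputable def restrict [DecidableEq H] (v : H → ℝ) (S : Finset H) : H → ℝ :=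
  fun h => if h ∈ S then v h / mass v S else 0

/-- The shrinkage `Δ` of a question `qi` on `(S, v)`. -/
noncomputable def shrink [Fintype A] [DecidableEq A] (qi : H → A)
    (S : Finset H) (v : H → ℝ) : ℝ :=
  mass v S - ∑ j : A, (mass v (S.filter fun s => qi s = j)) ^ 2 / mass v S

/-- The collision probability of a distribution `v`. -/
def CP [Fintype H] (v : H → ℝ) : ℝ := ∑ z : H, (v z) ^ 2

/-- Query trees: internal nodes are questions (indexed by `Fin m`), branches are answers,
leaves are hypotheses. -/
inductive QTree (m : ℕ) (H A : Type*) : Type _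
  | leaf : H → QTree m H A
  | node : Fin m → (A → QTree m H A) → QTree m H A

/-- Follow the answers of hypothesis `h` down the tree, returning the leaf reached. -/
def follow (q : Fin m → H → A) : QTree m H A → H → H
  | .leaf h', _ => h'
  | .node i ch, h => follow q (ch (q i h)) h

/-- The cost `c_T(h)`: sum of costs of the questions on the root-to-`h` path. -/
def pathCost (q : Fin m → H → A) (c : Fin m → ℝ) : QTree m H A → H → ℝ
  | .leaf _, _ => 0
  | .node i ch, h => c i + pathCost q c (ch (q i h)) h

/-- The leaves of `T` include `S`: every `h ∈ S` is identified by `T`. -/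
def ValidOn (q : Fin m → H → A) (T : QTree m H A) (S : Finset H) : Prop :=
  ∀ h ∈ S, follow q T h = h

/-- The expected cost `C(T, v)` of a query tree `T` under weights `v`. -/
noncomputable def treeCost [Fintype H] (q : Fin m → H → A) (c : Fin m → ℝ)
    (T : QTree m H A) (v : H → ℝ) : ℝ :=
  ∑ h : H, v h * pathCost q c T h

/-- The questions asked along the root-to-`h` path. -/
def pathQs (q : Fin m → H → A) : QTree m H A → H → List (Fin m)
  | .leaf _, _ => []
  | .node i ch, h => i :: pathQs q (ch (q i h)) h

/-- `T` is a greedy query tree for `π` on version space `S`: at every node it asks a question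
maximizing the shrinkage-cost ratio and recurses on each nonempty answer class. -/
inductive IsGreedy [Fintype A] [DecidableEq A] [DecidableEq H]
    (q : Fin m → H → A) (c : Fin m → ℝ) (π : H → ℝ) :
    QTree m H A → Finset H → Prop
  | leaf (h : H) : IsGreedy q c π (.leaf h) {h}
  | node (S : Finset H) (i : Fin m) (ch : A → QTree m H A)
      (hcard : 1 < S.card)
      (hmax : ∀ j : Fin m,
        shrink (q j) S (restrict π S) / c j ≤ shrink (q i) S (restrict π S) / c i)
      (hch : ∀ a : A, (S.filter fun s => q i s = a).Nonempty →
        IsGreedy q c π (ch a) (S.filter fun s => q i s = a)) :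
      IsGreedy q c π (.node i ch) S

/-- `T` is an `ε`-approximate greedy query tree for `π` on version space `S`. -/
inductive IsApproxGreedy [Fintype A] [DecidableEq A] [DecidableEq H]
    (ε : ℝ) (q : Fin m → H → A) (c : Fin m → ℝ) (π : H → ℝ) :
    QTree m H A → Finset H → Prop
  | leaf (h : H) : IsApproxGreedy ε q c π (.leaf h) {h}
  | node (S : Finset H) (i : Fin m) (ch : A → QTree m H A)
      (hcard : 1 < S.card)
      (happrox : ∀ j : Fin m,
        (1 - ε) * (shrink (q j) S (restrict π S) / c j) ≤
          shrink (q i) S (restrict π S) / c i)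
      (hch : ∀ a : A, (S.filter fun s => q i s = a).Nonempty →
        IsApproxGreedy ε q c π (ch a) (S.filter fun s => q i s = a)) :
      IsApproxGreedy ε q c π (.node i ch) S

/-- `T` is irreducible on version space `S`: every asked question strictly splits the
surviving set. -/
inductive Irreducible [DecidableEq A] (q : Fin m → H → A) :
    QTree m H A → Finset H → Prop
  | leaf (h : H) (S : Finset H) : Irreducible q (.leaf h) S
  | node (S : Finset H) (i : Fin m) (ch : A → QTree m H A)
      (hsplit : ∃ s ∈ S, ∃ t ∈ S, q i s ≠ q i t)
      (hch : ∀ a : A, (S.filter fun s => q i s = a).Nonempty →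
        Irreducible q (ch a) (S.filter fun s => q i s = a)) :
      Irreducible q (.node i ch) S


lemma pathCost_nonneg' (q : Fin m → H → A) (c : Fin m → ℝ) (hc : ∀ i, 0 < c i)
    (T : QTree m H A) (h : H) : 0 ≤ pathCost q c T h := by
  induction T with
  | leaf h' => simp [pathCost]
  | node i ch ih =>
    simp only [pathCost]
    exact add_nonneg (hc i).le (ih _)

lemma pathCost_le_len (q : Fin m → H → A) (c : Fin m → ℝ) (cmax : ℝ)
    (hc : ∀ i, c i ≤ cmax) (T : QTree m H A) (h : H) :
    pathCost q c T h ≤ ((pathQs q T h).length : ℝ) * cmax := by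
  induction T with
  | leaf h' => simp [pathCost, pathQs]
  | node i ch ih =>
    simp only [pathCost, pathQs, List.length_cons]
    push_cast
    nlinarith [ih (q i h), hc i]

lemma pathQs_length_le [DecidableEq A] (q : Fin m → H → A)
    (T : QTree m H A) (S : Finset H) (hirr : Irreducible q T S) :
    ∀ h ∈ S, (pathQs q T h).length ≤ S.card - 1 := by
  induction hirr with
  | leaf h' S => intro h hh; simp [pathQs]
  | node S i ch hsplit hch ih =>
    intro h hh
    have hhF : h ∈ S.filter fun s => q i s = q i h := by
      simp [Finset.mem_filter, hh]
    have hlen := ih (q i h) ⟨h, hhF⟩ h hhF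
    have hF1 : 1 ≤ (S.filter fun s => q i s = q i h).card :=
      Finset.card_pos.mpr ⟨h, hhF⟩
    have hFcard : (S.filter fun s => q i s = q i h).card < S.card := by
      obtain ⟨s, hs, t, ht, hst⟩ := hsplit
      apply Finset.card_lt_card
      rw [Finset.ssubset_iff_of_subset (Finset.filter_subset _ _)]
      by_cases hq : q i s = q i h
      · exact ⟨t, ht, by
          simp only [Finset.mem_filter, not_and]
          intro _ hcon
          exact hst (hq.trans hcon.symm)⟩
      · exact ⟨s, hs, by
          simp only [Finset.mem_filter, not_and]
          intro _ hcon
          exact hq hcon⟩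
    simp only [pathQs, List.length_cons]
    omega

set_option maxHeartbeats 1600000 in
/-- For `n = |H| ≥ 3` and any irreducible query tree `T` whose leaves are
`H`, the rounded distribution `π'` satisfies `(1/2)·C(T, π) ≤ C(T, π') ≤ (3/2)·C(T, π)`.
Here `π'` raises to `ε = c_min/(c_max·n³)` the mass of every `h` with `π(h) < ε` and
subtracts the total added mass from a fixed `h_j` with `π(h_j) ≥ 1/n`. -/
theorem rounding_cost_bound [Fintype H] [Fintype A] [DecidableEq H] [DecidableEq A]
    (π : H → ℝ) (hπpos : ∀ h, 0 < π h) (hπsum : ∑ h : H, π h = 1)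
    (hn : 3 ≤ Fintype.card H)
    (q : Fin m → H → A) (c : Fin m → ℝ) (hc : ∀ i, 0 < c i)
    (hdist : ∀ h h' : H, h ≠ h' → ∃ i : Fin m, q i h ≠ q i h')
    (cmin cmax : ℝ)
    (hcmin : IsLeast (Set.range c) cmin) (hcmax : IsGreatest (Set.range c) cmax)
    (eps : ℝ) (heps : eps = cmin / (cmax * (Fintype.card H : ℝ) ^ 3))
    (hj : H) (hhj : 1 / (Fintype.card H : ℝ) ≤ π hj)
    (π' : H → ℝ)
    (hπ' : ∀ h : H, π' h =
      (if π h < eps then eps else π h) -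
        (if h = hj then ∑ h' ∈ Finset.univ.filter (fun h'' => π h'' < eps), (eps - π h')
          else 0))
    (T : QTree m H A) (hT : ValidOn q T Finset.univ)
    (hirr : Irreducible q T Finset.univ) :
    (1 / 2) * treeCost q c T π ≤ treeCost q c T π' ∧
      treeCost q c T π' ≤ (3 / 2) * treeCost q c T π := by
  classical
  set N := Fintype.card H with hNdef
  have hN3 : (3:ℝ) ≤ (N:ℝ) := by exact_mod_cast hn
  have hN0 : (0:ℝ) < (N:ℝ) := by linarith
  obtain ⟨i0, hi0⟩ := hcmin.1
  have hcmin0 : 0 < cmin := hi0 ▸ hc i0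
  have hcc : cmin ≤ cmax := hcmax.2 ⟨i0, hi0⟩
  have hcmax0 : 0 < cmax := lt_of_lt_of_le hcmin0 hcc
  have heps0 : 0 < eps := by rw [heps]; positivity
  have hepsN : eps < 1 / (N:ℝ) := by
    rw [heps, div_lt_div_iff₀ (by positivity) hN0]
    have hA : cmin * (N:ℝ) < cmin * (N:ℝ)^3 := by
      have : (N:ℝ) < (N:ℝ)^3 := by nlinarith [mul_nonneg (show (0:ℝ) ≤ (N:ℝ)-3 by linarith) (sq_nonneg ((N:ℝ)))]
      exact (mul_lt_mul_iff_right₀ hcmin0).mpr this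
    have hB2 : cmin * (N:ℝ)^3 ≤ cmax * (N:ℝ)^3 :=
      mul_le_mul_of_nonneg_right hcc (by positivity)
    linarith
  have hjbig : ¬ π hj < eps := not_lt.mpr (le_trans hepsN.le hhj)
  set B := Finset.univ.filter (fun h'' => π h'' < eps) with hB
  set Δ := ∑ h' ∈ B, (eps - π h') with hΔ
  clear_value Δ
  have hΔ0 : 0 ≤ Δ := by
    rw [hΔ]
    exact Finset.sum_nonneg fun h hh => by
      have := (Finset.mem_filter.mp hh).2; linarith
  have hBcardNat : B.card ≤ N - 1 := by
    have hsub : B ⊆ Finset.univ.erase hj := by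
      intro x hx
      rw [Finset.mem_erase]
      refine ⟨?_, Finset.mem_univ x⟩
      rintro rfl
      exact hjbig (Finset.mem_filter.mp hx).2
    have := Finset.card_le_card hsub
    rwa [Finset.card_erase_of_mem (Finset.mem_univ hj), Finset.card_univ] at this
  have hBcard : (B.card : ℝ) ≤ (N:ℝ) - 1 := by
    calc (B.card:ℝ) ≤ ((N-1:ℕ):ℝ) := by exact_mod_cast hBcardNat
      _ = (N:ℝ) - 1 := by rw [Nat.cast_sub (by omega)]; simp
  have hΔub : Δ ≤ ((N:ℝ) - 1) * eps := by
    have h1 : Δ ≤ (B.card : ℝ) * eps := by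
      rw [hΔ]
      calc ∑ h' ∈ B, (eps - π h') ≤ ∑ h' ∈ B, eps :=
            Finset.sum_le_sum fun h _ => by linarith [hπpos h]
        _ = B.card * eps := by rw [Finset.sum_const, nsmul_eq_mul]
    exact h1.trans (mul_le_mul_of_nonneg_right hBcard heps0.le)
  have hpc0 : ∀ h, 0 ≤ pathCost q c T h := pathCost_nonneg' q c hc T
  have hpcub : ∀ h : H, pathCost q c T h ≤ ((N:ℝ)-1) * cmax := by
    intro h
    have h1 := pathCost_le_len q c cmax (fun i => hcmax.2 ⟨i, rfl⟩) T h
    have h2 := pathQs_length_le q T Finset.univ hirr h (Finset.mem_univ h)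
    rw [Finset.card_univ] at h2
    have h3 : ((pathQs q T h).length : ℝ) ≤ (N:ℝ) - 1 := by
      calc ((pathQs q T h).length:ℝ) ≤ ((N-1:ℕ):ℝ) := by exact_mod_cast h2
        _ = (N:ℝ) - 1 := by rw [Nat.cast_sub (by omega)]; simp
    nlinarith [hcmax0]
  have hpclb : ∀ h : H, cmin ≤ pathCost q c T h := by
    cases T with
    | leaf h' =>
      exfalso
      obtain ⟨a, b, hab⟩ := Fintype.exists_pair_of_one_lt_card
        (by omega : 1 < Fintype.card H)
      have ha := hT a (Finset.mem_univ a)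
      have hb := hT b (Finset.mem_univ b)
      simp only [follow] at ha hb
      exact hab (ha ▸ hb ▸ rfl)
    | node i ch =>
      intro h
      simp only [pathCost]
      have h1 := pathCost_nonneg' q c hc (ch (q i h)) h
      have h2 : cmin ≤ c i := hcmin.2 ⟨i, rfl⟩
      linarith
  have hTC : cmin ≤ treeCost q c T π := by
    calc cmin = ∑ h : H, π h * cmin := by rw [← Finset.sum_mul, hπsum, one_mul]
      _ ≤ ∑ h : H, π h * pathCost q c T h :=
          Finset.sum_le_sum fun h _ =>
            mul_le_mul_of_nonneg_left (hpclb h) (hπpos h).le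
      _ = treeCost q c T π := rfl
  have hD : treeCost q c T π' = treeCost q c T π
      + ((∑ h ∈ B, (eps - π h) * pathCost q c T h) - Δ * pathCost q c T hj) := by
    unfold treeCost
    have hterm : ∀ h : H, π' h * pathCost q c T h = π h * pathCost q c T h
        + (if π h < eps then (eps - π h) else 0) * pathCost q c T h
        - (if h = hj then Δ else 0) * pathCost q c T h := by
      intro h
      rw [hπ' h]
      split_ifs <;> ring
    rw [Finset.sum_congr rfl fun h _ => hterm h]
    have e1 : ∑ h : H, (if π h < eps then (eps - π h) else 0) * pathCost q c T h
        = ∑ h ∈ B, (eps - π h) * pathCost q c T h := by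
      rw [hB, Finset.sum_filter]
      exact Finset.sum_congr rfl fun h _ => by
        by_cases h1 : π h < eps <;> simp [h1]
    have e2 : ∑ h : H, (if h = hj then Δ else 0) * pathCost q c T h
        = Δ * pathCost q c T hj := by
      simp only [ite_mul, zero_mul]
      rw [Finset.sum_ite_eq' Finset.univ hj (fun h => Δ * pathCost q c T h)]
      simp
    rw [Finset.sum_sub_distrib, Finset.sum_add_distrib, e1, e2]
    ring
  have hS1 : 0 ≤ ∑ h ∈ B, (eps - π h) * pathCost q c T h :=
    Finset.sum_nonneg fun h hh => by
      have := (Finset.mem_filter.mp hh).2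
      exact mul_nonneg (by linarith) (hpc0 h)
  have hS1ub : ∑ h ∈ B, (eps - π h) * pathCost q c T h ≤ Δ * (((N:ℝ)-1) * cmax) := by
    rw [hΔ, Finset.sum_mul]
    apply Finset.sum_le_sum
    intro h hh
    have := (Finset.mem_filter.mp hh).2
    exact mul_le_mul_of_nonneg_left (hpcub h) (by linarith)
  have hS2 : 0 ≤ Δ * pathCost q c T hj := mul_nonneg hΔ0 (hpc0 hj)
  have hS2ub : Δ * pathCost q c T hj ≤ Δ * (((N:ℝ)-1)*cmax) :=
    mul_le_mul_of_nonneg_left (hpcub hj) hΔ0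
  have hkey : Δ * (((N:ℝ)-1) * cmax) ≤ cmin / 2 := by
    have h1 : Δ * (((N:ℝ)-1)*cmax) ≤ (((N:ℝ)-1)*eps) * (((N:ℝ)-1)*cmax) :=
      mul_le_mul_of_nonneg_right hΔub (by nlinarith)
    have heq : (((N:ℝ)-1)*eps) * (((N:ℝ)-1)*cmax)
        = ((N:ℝ)-1)^2 * cmin / (N:ℝ)^3 := by
      rw [heps]; field_simp
    have h2 : ((N:ℝ)-1)^2 * cmin / (N:ℝ)^3 ≤ cmin / 2 := by
      rw [div_le_div_iff₀ (by positivity) (by norm_num)]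
      have hcube : 2*((N:ℝ)-1)^2 ≤ (N:ℝ)^3 := by
        nlinarith [mul_nonneg (show (0:ℝ) ≤ (N:ℝ)-3 by linarith) (sq_nonneg ((N:ℝ)))]
      linarith [mul_le_mul_of_nonneg_right hcube hcmin0.le]
    rw [heq] at h1
    linarith
  refine ⟨?_, ?_⟩
  · rw [hD]; linarith
  · rw [hD]; linarith
end ActiveLearning
end

section
/- Let ε ∈ [0,1), let S ⊆ H with |S| > 1 and h_0 ∈ S with π_S(h_0) > 1/2, let R = S \ {h_0}, and let T* be any query tree whose leaves contain S. If a question q_i satisfies Δ_i(S, π_S)/c_i ≥ (1−ε) · max_j Δ_j(S, π_S)/c_j, then δ_i / c_i ≥ (1−ε) / (2 · C*(h_0)). -/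
open Finset

namespace ActiveLearning

variable {H A : Type*} {m : ℕ}

section Helpers

lemma mass_nonneg' {v : H → ℝ} (hv : ∀ h, 0 ≤ v h) (S : Finset H) : 0 ≤ mass v S :=
  Finset.sum_nonneg fun s _ => hv s

lemma mass_mono {v : H → ℝ} (hv : ∀ h, 0 ≤ v h) {T S : Finset H} (h : T ⊆ S) :
    mass v T ≤ mass v S :=
  Finset.sum_le_sum_of_subset_of_nonneg h (fun s _ _ => hv s)

lemma mass_restrict [DecidableEq H] {v : H → ℝ} {S T : Finset H} (hT : T ⊆ S) :
    mass (restrict v S) T = mass v T / mass v S := by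
  unfold mass restrict
  rw [Finset.sum_div]
  exact Finset.sum_congr rfl fun t ht => if_pos (hT ht)

lemma pathCost_eq_sum (q : Fin m → H → A) (c : Fin m → ℝ) (T : QTree m H A) (h : H) :
    pathCost q c T h = ((pathQs q T h).map c).sum := by
  induction T with
  | leaf h' => simp [pathCost, pathQs]
  | node i ch ih => simp [pathCost, pathQs, ih]

lemma cover_path (q : Fin m → H → A) (T : QTree m H A) :
    ∀ r h0 : H, r ≠ h0 → follow q T r = r → follow q T h0 = h0 →
      ∃ j ∈ pathQs q T h0, q j r ≠ q j h0 := by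
  induction T with
  | leaf h' =>
      intro r h0 hne hr h0'
      simp only [follow] at hr h0'
      exact absurd (hr.symm.trans h0') hne
  | node i ch ih =>
      intro r h0 hne hr h0'
      simp only [follow] at hr h0'
      by_cases hq : q i r = q i h0
      · obtain ⟨j, hj, hne'⟩ := ih (q i h0) r h0 hne (hq ▸ hr) h0'
        exact ⟨j, List.mem_cons_of_mem _ hj, hne'⟩
      · exact ⟨i, List.mem_cons_self, hq⟩

lemma cover_mass [DecidableEq A] (v : H → ℝ) (hv : ∀ h, 0 ≤ v h)
    (q : Fin m → H → A) (h0 : H) :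
    ∀ (L : List (Fin m)) (R : Finset H),
      (∀ r ∈ R, ∃ j ∈ L, q j r ≠ q j h0) →
      mass v R ≤ (L.map fun j => mass v (R.filter fun r => q j r ≠ q j h0)).sum := by
  intro L
  induction L with
  | nil =>
      intro R hcov
      have hRe : R = ∅ := by
        by_contra h
        obtain ⟨r, hr⟩ := Finset.nonempty_iff_ne_empty.mpr h
        obtain ⟨j, hj, _⟩ := hcov r hr
        simp at hj
      simp [hRe, mass]
  | cons a L ih =>
      intro R hcov
      have hsplit : mass v (R.filter fun r => q a r = q a h0)
          + mass v (R.filter fun r => q a r ≠ q a h0) = mass v R := by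
        simpa only [ne_eq, mass] using
          Finset.sum_filter_add_sum_filter_not R (fun r => q a r = q a h0) v
      set R' := R.filter fun r => q a r = q a h0 with hR'
      have hcov' : ∀ r ∈ R', ∃ j ∈ L, q j r ≠ q j h0 := by
        intro r hr
        have hrR := Finset.mem_filter.mp hr
        obtain ⟨j, hj, hne⟩ := hcov r hrR.1
        rcases List.mem_cons.mp hj with rfl | hj'
        · exact absurd hrR.2 hne
        · exact ⟨j, hj', hne⟩
      have hrec := ih R' hcov'
      have hmono : (L.map fun j => mass v (R'.filter fun r => q j r ≠ q j h0)).sum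
          ≤ (L.map fun j => mass v (R.filter fun r => q j r ≠ q j h0)).sum := by
        refine List.sum_le_sum fun j _ => ?_
        exact mass_mono hv (Finset.filter_subset_filter _ (Finset.filter_subset _ _))
      simp only [List.map_cons, List.sum_cons]
      linarith

end Helpers

/-- If `ε ∈ [0,1)`, `h_0 ∈ S` has `π_S(h_0) > 1/2`, `R = S \ {h_0}`, `T*`
is any query tree whose leaves contain `S`, and `q_i` is an `ε`-approximately greedy
choice on `S`, then `δ_i / c_i ≥ (1−ε) / (2 · C*(h_0))`. -/
theorem approx_greedy_separates [Fintype H] [Fintype A] [DecidableEq H] [DecidableEq A]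
    (π : H → ℝ) (hπpos : ∀ h, 0 < π h) (hπsum : ∑ h : H, π h = 1)
    (hH : 1 < Fintype.card H)
    (q : Fin m → H → A) (c : Fin m → ℝ) (hc : ∀ i, 0 < c i)
    (ε : ℝ) (hε0 : 0 ≤ ε) (hε1 : ε < 1)
    (S : Finset H) (hS : 1 < S.card)
    (h0 : H) (h0S : h0 ∈ S) (hh0 : 1 / 2 < restrict π S h0)
    (Tstar : QTree m H A) (hTstar : ValidOn q Tstar S)
    (i : Fin m)
    (hi : ∀ j : Fin m,
      (1 - ε) * (shrink (q j) S (restrict π S) / c j) ≤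
        shrink (q i) S (restrict π S) / c i) :
    (1 - ε) / (2 * pathCost q c Tstar h0) ≤
      mass (restrict π (S.erase h0))
        ((S.erase h0).filter fun r => q i r ≠ q i h0) / c i := by
  set v := restrict π S with hv
  have hMpos : 0 < mass π S :=
    Finset.sum_pos (fun s _ => hπpos s) ⟨h0, h0S⟩
  have hvnn : ∀ h, 0 ≤ v h := by
    intro h
    simp only [hv, restrict]
    split
    · exact div_nonneg (hπpos h).le hMpos.le
    · exact le_rfl
  have hvpos : ∀ h ∈ S, 0 < v h := by
    intro h hh
    simp only [hv, restrict, if_pos hh]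
    exact div_pos (hπpos h) hMpos
  have hmassS : mass v S = 1 := by
    rw [hv, mass_restrict (le_refl S)]
    exact div_self hMpos.ne'
  set p := v h0 with hp
  set R := S.erase h0 with hRdef
  have hRne : R.Nonempty := by
    obtain ⟨b, hbS, hbne⟩ := Finset.exists_mem_ne hS h0
    exact ⟨b, Finset.mem_erase.mpr ⟨hbne, hbS⟩⟩
  have h1p : mass v R = 1 - p := by
    have := Finset.add_sum_erase S v h0S
    have hm : p + mass v R = mass v S := this
    linarith
  have hRpos : 0 < mass v R :=
    Finset.sum_pos (fun r hr => hvpos r (Finset.mem_of_mem_erase hr)) hRne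
  have hp1 : 0 < 1 - p := h1p ▸ hRpos
  have hph : 1 / 2 < p := hh0
  set D : Fin m → ℝ := fun j => mass v (S.filter fun s => q j s ≠ q j h0) with hD
  have hDnn : ∀ j, 0 ≤ D j := fun j => mass_nonneg' hvnn _
  have hfiltR : ∀ j : Fin m,
      R.filter (fun r => q j r ≠ q j h0) = S.filter (fun s => q j s ≠ q j h0) := by
    intro j
    rw [hRdef, Finset.filter_erase]
    refine Finset.erase_eq_of_notMem ?_
    simp
  have hDle : ∀ j, D j ≤ 1 - p := by
    intro j
    rw [← h1p, hD]
    refine mass_mono hvnn ?_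
    intro s hs
    obtain ⟨hsS, hsne⟩ := Finset.mem_filter.mp hs
    refine Finset.mem_erase.mpr ⟨?_, hsS⟩
    rintro rfl
    exact hsne rfl
  have hwnn : ∀ (j : Fin m) (a : A), 0 ≤ mass v (S.filter fun s => q j s = a) :=
    fun j a => mass_nonneg' hvnn _
  have hwsum : ∀ j : Fin m, ∑ a : A, mass v (S.filter fun s => q j s = a) = 1 := by
    intro j
    rw [← hmassS]
    simpa only [mass] using Finset.sum_fiberwise S (fun s => q j s) v
  have hwa : ∀ j : Fin m, mass v (S.filter fun s => q j s = q j h0) = 1 - D j := by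
    intro j
    have := Finset.sum_filter_add_sum_filter_not S (fun s => q j s = q j h0) v
    have h2 : mass v (S.filter fun s => q j s = q j h0)
        + mass v (S.filter fun s => q j s ≠ q j h0) = mass v S := by
      simpa only [ne_eq, mass] using this
    rw [hmassS] at h2
    simp only [hD]
    linarith
  have hshrink_eq : ∀ j : Fin m, shrink (q j) S v
      = 1 - ∑ a : A, (mass v (S.filter fun s => q j s = a)) ^ 2 := by
    intro j
    unfold shrink
    rw [hmassS]
    simp
  -- upper bound : shrink i ≤ 2 * D i
  have hup : shrink (q i) S v ≤ 2 * D i := by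
    have hsingle : (mass v (S.filter fun s => q i s = q i h0)) ^ 2
        ≤ ∑ a : A, (mass v (S.filter fun s => q i s = a)) ^ 2 :=
      Finset.single_le_sum (f := fun a => (mass v (S.filter fun s => q i s = a)) ^ 2)
        (fun a _ => sq_nonneg _) (Finset.mem_univ _)
    rw [hshrink_eq i]
    rw [hwa i] at hsingle
    nlinarith [hDnn i]
  -- lower bound : D j ≤ shrink j
  have hlow : ∀ j, D j ≤ shrink (q j) S v := by
    intro j
    set w : A → ℝ := fun a => mass v (S.filter fun s => q j s = a) with hwdef
    have htail : ∑ a ∈ Finset.univ.erase (q j h0), w a = D j := by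
      have := Finset.add_sum_erase Finset.univ w (Finset.mem_univ (q j h0))
      have h2 : w (q j h0) = 1 - D j := hwa j
      have h3 : ∑ a : A, w a = 1 := hwsum j
      rw [h2] at this
      rw [h3] at this
      linarith
    have hsq : ∑ a ∈ Finset.univ.erase (q j h0), (w a) ^ 2
        ≤ (∑ a ∈ Finset.univ.erase (q j h0), w a) ^ 2 :=
      Finset.sum_sq_le_sq_sum_of_nonneg (fun a _ => hwnn j a)
    have hdecomp : (w (q j h0)) ^ 2 + ∑ a ∈ Finset.univ.erase (q j h0), (w a) ^ 2
        = ∑ a : A, (w a) ^ 2 :=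
      Finset.add_sum_erase Finset.univ (fun a => (w a) ^ 2) (Finset.mem_univ (q j h0))
    rw [hshrink_eq j]
    have h2 : w (q j h0) = 1 - D j := hwa j
    rw [htail] at hsq
    have hDle2 : D j ≤ 1 - p := hDle j
    nlinarith [hDnn j]
  have hεp : 0 < 1 - ε := by linarith
  -- key per-question inequality
  have hkey : ∀ j : Fin m, (1 - ε) * D j * c i ≤ 2 * D i * c j := by
    intro j
    have h1 : (1 - ε) * (D j / c j) ≤ (1 - ε) * (shrink (q j) S v / c j) :=
      mul_le_mul_of_nonneg_left ((div_le_div_iff_of_pos_right (hc j)).mpr (hlow j)) hεp.le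
    have h3 : shrink (q i) S v / c i ≤ 2 * D i / c i :=
      (div_le_div_iff_of_pos_right (hc i)).mpr hup
    have h4 : (1 - ε) * D j / c j ≤ 2 * D i / c i := by
      rw [mul_div_assoc]
      exact le_trans h1 (le_trans (hi j) h3)
    exact (div_le_div_iff₀ (hc j) (hc i)).mp h4
  -- covering by the path to h0
  set L := pathQs q Tstar h0 with hL
  have hcov : ∀ r ∈ R, ∃ j ∈ L, q j r ≠ q j h0 := by
    intro r hr
    obtain ⟨hrne, hrS⟩ := Finset.mem_erase.mp hr
    exact cover_path q Tstar r h0 hrne (hTstar r hrS) (hTstar h0 h0S)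
  have hLne : L ≠ [] := by
    obtain ⟨r, hr⟩ := hRne
    obtain ⟨j, hj, _⟩ := hcov r hr
    exact List.ne_nil_of_mem hj
  set Cst := (L.map c).sum with hCst
  have hCpos : 0 < Cst := by
    refine List.sum_pos _ ?_ ?_
    · intro x hx
      obtain ⟨j, _, rfl⟩ := List.mem_map.mp hx
      exact hc j
    · simpa using hLne
  have hcover := cover_mass v hvnn q h0 L R hcov
  have hDRD : ∀ j : Fin m, mass v (R.filter fun r => q j r ≠ q j h0) = D j := by
    intro j
    rw [hfiltR j]
  have hsum1 : mass v R ≤ (L.map D).sum := by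
    refine le_trans hcover (le_of_eq ?_)
    congr 1
    exact List.map_congr_left fun j _ => hDRD j
  set K := 2 * D i / ((1 - ε) * c i) with hK
  have hterm : ∀ j ∈ L, D j ≤ K * c j := by
    intro j _
    rw [hK, div_mul_eq_mul_div, le_div_iff₀ (mul_pos hεp (hc i))]
    calc D j * ((1 - ε) * c i) = (1 - ε) * D j * c i := by ring
      _ ≤ 2 * D i * c j := hkey j
      _ = 2 * D i * c j := rfl
  have hsum2 : (L.map D).sum ≤ K * Cst := by
    have := List.sum_le_sum (l := L) (f := D) (g := fun j => K * c j) hterm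
    rw [List.sum_map_mul_left] at this
    exact this
  have hmain : 1 - p ≤ K * Cst := by
    rw [← h1p]
    exact le_trans hsum1 hsum2
  have hfinal : (1 - ε) * (1 - p) * c i ≤ 2 * D i * Cst := by
    rw [hK, div_mul_eq_mul_div, le_div_iff₀ (mul_pos hεp (hc i))] at hmain
    nlinarith [hmain]
  -- identify the goal quantities
  have hgoal_eq : mass (restrict π R) (R.filter fun r => q i r ≠ q i h0)
      = D i / (1 - p) := by
    rw [mass_restrict (Finset.filter_subset _ _)]
    have e1 : mass π (R.filter fun r => q i r ≠ q i h0) = D i * mass π S := by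
      have := mass_restrict (v := π) (S := S)
        (T := S.filter fun s => q i s ≠ q i h0) (Finset.filter_subset _ _)
      rw [hfiltR i]
      have hDi : D i = mass π (S.filter fun s => q i s ≠ q i h0) / mass π S := this
      rw [hDi]
      field_simp
    have e2 : mass π R = (1 - p) * mass π S := by
      have := mass_restrict (v := π) (S := S) (T := R)
        (Finset.erase_subset _ _)
      rw [← hv] at this
      rw [h1p] at this
      rw [this]
      field_simp
    rw [e1, e2, mul_div_mul_right _ _ hMpos.ne']
  have hpc : pathCost q c Tstar h0 = Cst := by
    rw [hCst, hL, pathCost_eq_sum]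
  rw [hpc]
  rw [hgoal_eq, div_div, div_le_div_iff₀ (by positivity) (mul_pos hp1 (hc i))]
  nlinarith [hfinal]
end ActiveLearning
end
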